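/- Let β₀ ∈ (1/2, 1). Suppose 1/2 < β < 1, 1−β < α < β, and both |α/(1−β) − β₀/(1−β₀)| < 1/100 and |β/(1−α) − β₀/(1−β₀)| < 1/100 hold. Let m ≥ 1 be an integer such that (β/(1−α))·(1−β)·(β/α)^m ≥ α and (β/(1−α))·(1−β)·(β/α)^{m−1} < α. Then β₀/(1−β₀) − 2 < m < β₀/(1−β₀) + 1. -/

import Mathlib

set_option maxHeartbeats 800000

lemma aux_hasDeriv (c d : ℝ) {x : ℝ} (hx : 1 < x) :
    HasDerivAt (fun y : ℝ => c * Real.log (y - 1) - d * Real.log y)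
      (c * (x - 1)⁻¹ - d * x⁻¹) x := by
  have h1 : HasDerivAt (fun y : ℝ => y - 1) 1 x := (hasDerivAt_id x).sub_const 1
  have h2 : HasDerivAt (fun y : ℝ => Real.log (y - 1)) (1 / (x - 1)) x :=
    h1.log (by linarith)
  have h3 : HasDerivAt Real.log x⁻¹ x := Real.hasDerivAt_log (by linarith)
  have := (h2.const_mul c).sub (h3.const_mul d)
  simp only [one_div] at this
  exact this

lemma log_mono_aux (c d P Q : ℝ) (hP : 1 < P) (hPQ : P < Q)
    (hpos : ∀ x ∈ Set.Icc P Q, 0 < c * (x - 1)⁻¹ - d * x⁻¹) :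
    c * Real.log (P - 1) - d * Real.log P < c * Real.log (Q - 1) - d * Real.log Q := by
  have key : StrictMonoOn (fun y : ℝ => c * Real.log (y - 1) - d * Real.log y)
      (Set.Icc P Q) := by
    apply strictMonoOn_of_deriv_pos (convex_Icc P Q)
    · intro x hx
      exact (aux_hasDeriv c d (lt_of_lt_of_le hP hx.1)).continuousAt.continuousWithinAt
    · intro x hx
      rw [interior_Icc] at hx
      rw [(aux_hasDeriv c d (lt_trans hP hx.1)).deriv]
      exact hpos x ⟨le_of_lt hx.1, le_of_lt hx.2⟩
  exact key ⟨le_refl P, le_of_lt hPQ⟩ ⟨le_of_lt hPQ, le_refl Q⟩ hPQ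


/-- If `(α,β)` is close enough to the diagonal point `(β₀,β₀)` (in the sense that
`α/(1-β)` and `β/(1-α)` are within `1/100` of `β₀/(1-β₀)`), and `m ≥ 1` is the integer
determined by `(β/(1-α))(1-β)(β/α)^m ≥ α > (β/(1-α))(1-β)(β/α)^{m-1}` (i.e. `m = m̄_1`,
the length of the initial block of `L`'s in the kneading sequence of `T_{α,β}`), then
`β₀/(1-β₀) - 2 < m < β₀/(1-β₀) + 1`. -/
theorem stmt10 (β₀ : ℝ) (hβ₀ : β₀ ∈ Set.Ioo (1 / 2 : ℝ) 1)
    (α β : ℝ) (hβ1 : 1 / 2 < β) (hβ2 : β < 1) (hα1 : 1 - β < α) (hα2 : α < β)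
    (h1 : |α / (1 - β) - β₀ / (1 - β₀)| < 1 / 100)
    (h2 : |β / (1 - α) - β₀ / (1 - β₀)| < 1 / 100)
    (m : ℕ) (hm : 1 ≤ m)
    (hub : α ≤ β / (1 - α) * (1 - β) * (β / α) ^ m)
    (hlb : β / (1 - α) * (1 - β) * (β / α) ^ (m - 1) < α) :
    β₀ / (1 - β₀) - 2 < (m : ℝ) ∧ (m : ℝ) < β₀ / (1 - β₀) + 1 := by
  obtain ⟨hb1, hb2⟩ := hβ₀
  set K : ℝ := β₀ / (1 - β₀) with hKdef
  have hb3 : (0:ℝ) < 1 - β₀ := by linarith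
  have hK1 : 1 < K := by
    rw [hKdef, lt_div_iff₀ hb3]; linarith
  have hβpos : (0:ℝ) < 1 - β := by linarith
  have hαpos : (0:ℝ) < α := by linarith
  have h1α : (0:ℝ) < 1 - α := by linarith
  have hβ0 : (0:ℝ) < β := by linarith
  set A : ℝ := α / (1 - β) with hAdef
  set B : ℝ := β / (1 - α) with hBdef
  have hA1 : 1 < A := by rw [hAdef, lt_div_iff₀ hβpos]; linarith
  have hB1 : 1 < B := by rw [hBdef, lt_div_iff₀ h1α]; linarith
  have hAK := abs_lt.mp h1
  have hBK := abs_lt.mp h2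
  have hApos : (0:ℝ) < A := by linarith
  have hBpos : (0:ℝ) < B := by linarith
  set r : ℝ := β / α with hrdef
  have hr1 : 1 < r := by rw [hrdef, lt_div_iff₀ hαpos]; linarith
  have hrpos : (0:ℝ) < r := by linarith
  -- translate hub, hlb
  have hub' : A ≤ B * r ^ m := by
    rw [hAdef, div_le_iff₀ hβpos]
    calc α ≤ β / (1 - α) * (1 - β) * (β / α) ^ m := hub
    _ = B * (β/α) ^ m * (1 - β) := by ring
  have hlb' : B * r ^ (m - 1) < A := by
    rw [hAdef, lt_div_iff₀ hβpos]
    calc B * r ^ (m-1) * (1 - β) = β / (1 - α) * (1 - β) * (β / α) ^ (m-1) := by ring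
    _ < α := hlb
  -- logs
  set L : ℝ := Real.log r with hLdef
  have hL : 0 < L := Real.log_pos hr1
  have hAB : B < A := by
    have : B ≤ B * r ^ (m-1) := le_mul_of_one_le_right (le_of_lt hBpos) (one_le_pow₀ (le_of_lt hr1))
    linarith
  set D : ℝ := Real.log A - Real.log B with hDdef
  have hDm : D ≤ (m:ℝ) * L := by
    have := Real.log_le_log hApos hub'
    rw [Real.log_mul (ne_of_gt hBpos) (by positivity), Real.log_pow] at this
    rw [hDdef]; linarith
  have hDm' : ((m:ℝ) - 1) * L < D := by
    have := Real.log_lt_log (by positivity) hlb'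
    rw [Real.log_mul (ne_of_gt hBpos) (by positivity), Real.log_pow] at this
    have hc : ((m - 1 : ℕ) : ℝ) = (m:ℝ) - 1 := by
      push_cast [Nat.cast_sub hm]; ring
    rw [hDdef]; rw [hc] at this; linarith
  -- identity in logs
  have hs : (0:ℝ) < α + β - 1 := by linarith
  have lA : Real.log A = Real.log α - Real.log (1 - β) := by
    rw [hAdef, Real.log_div (ne_of_gt hαpos) (ne_of_gt hβpos)]
  have lB : Real.log B = Real.log β - Real.log (1 - α) := by
    rw [hBdef, Real.log_div (ne_of_gt hβ0) (ne_of_gt h1α)]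
  have lA' : Real.log (A - 1) = Real.log (α + β - 1) - Real.log (1 - β) := by
    have : A - 1 = (α + β - 1) / (1 - β) := by
      rw [hAdef]; field_simp; ring
    rw [this, Real.log_div (ne_of_gt hs) (ne_of_gt hβpos)]
  have lB' : Real.log (B - 1) = Real.log (α + β - 1) - Real.log (1 - α) := by
    have : B - 1 = (α + β - 1) / (1 - α) := by
      rw [hBdef]; field_simp; ring
    rw [this, Real.log_div (ne_of_gt hs) (ne_of_gt h1α)]
  have lr : L = Real.log β - Real.log α := by
    rw [hLdef, hrdef, Real.log_div (ne_of_gt hβ0) (ne_of_gt hαpos)]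
  have hLiden : L = (Real.log (A - 1) - Real.log (B - 1)) - D := by
    rw [hDdef, lA, lB, lA', lB', lr]; ring
  -- Key 1 : D < K * L
  have key1 : D < K * L := by
    have := log_mono_aux K (K + 1) B A hB1 hAB ?_
    · rw [hLiden, hDdef]; linarith [this]
    · intro x hx
      have hx1 : 1 < x := lt_of_lt_of_le hB1 hx.1
      have hxK : x < K + 1 := by
        have := hx.2; have := hAK.2; linarith
      rw [sub_pos, ← div_eq_mul_inv, ← div_eq_mul_inv,
        div_lt_div_iff₀ (by linarith) (by linarith)]
      nlinarith
  -- Key 2 : (K - 2) * L < D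
  have key2 : (K - 2) * L < D := by
    have := log_mono_aux (2 - K) (1 - K) B A hB1 hAB ?_
    · rw [hLiden, hDdef]; linarith [this]
    · intro x hx
      have hx1 : 1 < x := lt_of_lt_of_le hB1 hx.1
      have hxK : K - 1 < x := by
        have := hx.1; have := hBK.1; linarith
      rw [sub_pos, ← div_eq_mul_inv, ← div_eq_mul_inv,
        div_lt_div_iff₀ (by linarith) (by linarith)]
      nlinarith
  constructor
  · have h3 : (K - 2) * L < (m:ℝ) * L := lt_of_lt_of_le key2 hDm
    have := lt_of_mul_lt_mul_right h3 hL.le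
    linarith
  · have h3 : ((m:ℝ) - 1) * L < K * L := lt_trans hDm' key1
    have := lt_of_mul_lt_mul_right h3 hL.le
    linarith
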